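/- Let X be a real separable Hilbert space with a Hilbert (orthonormal) basis (e_n)_{n ≥ 1} indexed by the positive integers, and let b : ℝ → ℝ satisfy b(r) < −1 for every r. Let 0 < α < β < 1 and t, s ∈ ℝ. Then the diagonal map D : X → X defined by D w = Σ_{n ≥ 1} ((n² − b(t))^{α} / (n² − b(s))^{β}) ⟨w, e_n⟩ e_n is a well-defined bounded linear operator, and ‖D w‖ ≤ C_{α,β} ‖w‖ for all w ∈ X, where C_{α,β} = sup_{n ≥ 1} ((n² − b(t)) / (n² + 1))^{β} is finite. -/
import Mathlib


open scoped RealInnerProductSpace ENNReal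

/-- the diagonal map `D w = Σ ((n²−b(t))^α/(n²−b(s))^β)⟨w,e_n⟩e_n`
is a well-defined bounded linear operator with
`‖Dw‖ ≤ C_{α,β}‖w‖`, `C_{α,β} = sup_n ((n²−b(t))/(n²+1))^β < ∞`. -/
theorem stmt_13
    {X : Type*} [NormedAddCommGroup X] [InnerProductSpace ℝ X] [CompleteSpace X]
    (e : HilbertBasis ℕ+ ℝ X)
    (b : ℝ → ℝ) (hb : ∀ r : ℝ, b r < -1)
    (α β : ℝ) (hα : 0 < α) (hαβ : α < β) (hβ : β < 1)
    (t s : ℝ) :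
    BddAbove (Set.range fun n : ℕ+ => (((n : ℝ) ^ 2 - b t) / ((n : ℝ) ^ 2 + 1)) ^ β) ∧
    (∀ w : X, Summable fun n : ℕ+ =>
      ((((n : ℝ) ^ 2 - b t) ^ α / ((n : ℝ) ^ 2 - b s) ^ β) * ⟪w, e n⟫) • e n) ∧
    IsBoundedLinearMap ℝ (fun w : X => ∑' n : ℕ+,
      ((((n : ℝ) ^ 2 - b t) ^ α / ((n : ℝ) ^ 2 - b s) ^ β) * ⟪w, e n⟫) • e n) ∧
    (∀ w : X,
      ‖∑' n : ℕ+, ((((n : ℝ) ^ 2 - b t) ^ α / ((n : ℝ) ^ 2 - b s) ^ β) * ⟪w, e n⟫) • e n‖ ≤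
        (⨆ n : ℕ+, (((n : ℝ) ^ 2 - b t) / ((n : ℝ) ^ 2 + 1)) ^ β) * ‖w‖) := by
  have hn1 : ∀ n : ℕ+, (1 : ℝ) ≤ (n : ℝ) ^ 2 := by
    intro n
    have : (1 : ℝ) ≤ (n : ℝ) := by exact_mod_cast n.one_le
    nlinarith
  have hbt : 1 < -b t := by linarith [hb t]
  have hbs : 1 < -b s := by linarith [hb s]
  have ht2 : ∀ n : ℕ+, (2 : ℝ) ≤ (n : ℝ) ^ 2 - b t := by intro n; linarith [hn1 n]
  have hs2 : ∀ n : ℕ+, (2 : ℝ) ≤ (n : ℝ) ^ 2 - b s := by intro n; linarith [hn1 n]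
  have h21 : ∀ n : ℕ+, (2 : ℝ) ≤ (n : ℝ) ^ 2 + 1 := by intro n; linarith [hn1 n]
  set c : ℕ+ → ℝ := fun n => ((n : ℝ) ^ 2 - b t) ^ α / ((n : ℝ) ^ 2 - b s) ^ β with hc
  set ter : ℕ+ → ℝ := fun n => (((n : ℝ) ^ 2 - b t) / ((n : ℝ) ^ 2 + 1)) ^ β with hter
  -- BddAbove
  have hBdd : BddAbove (Set.range ter) := by
    refine ⟨(1 + (-1 - b t) / 2) ^ β, ?_⟩
    rintro x ⟨n, rfl⟩
    show (((n : ℝ) ^ 2 - b t) / ((n : ℝ) ^ 2 + 1)) ^ β ≤ (1 + (-1 - b t) / 2) ^ β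
    have h1 : ((n : ℝ) ^ 2 - b t) / ((n : ℝ) ^ 2 + 1) ≤ 1 + (-1 - b t) / 2 := by
      rw [div_le_iff₀ (by nlinarith [h21 n])]
      nlinarith [hn1 n]
    refine Real.rpow_le_rpow (div_nonneg (by linarith [ht2 n]) (by linarith [h21 n])) h1
      (by linarith)
  set C : ℝ := ⨆ n : ℕ+, ter n with hC
  have hterC : ∀ n : ℕ+, ter n ≤ C := fun n => le_ciSup hBdd n
  have hter_nn : ∀ n : ℕ+, 0 ≤ ter n := by
    intro n
    exact Real.rpow_nonneg (div_nonneg (by linarith [ht2 n]) (by linarith [h21 n])) β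
  have hcnn : ∀ n : ℕ+, 0 ≤ c n := by
    intro n
    show 0 ≤ ((n : ℝ) ^ 2 - b t) ^ α / ((n : ℝ) ^ 2 - b s) ^ β
    have h1 : (0:ℝ) < (n : ℝ) ^ 2 - b t := by linarith [ht2 n]
    have h2 : (0:ℝ) < (n : ℝ) ^ 2 - b s := by linarith [hs2 n]
    positivity
  have hcC : ∀ n : ℕ+, c n ≤ C := by
    intro n
    refine le_trans ?_ (hterC n)
    have hxt : (0:ℝ) < (n : ℝ) ^ 2 - b t := by linarith [ht2 n]
    have hxs : (0:ℝ) < (n : ℝ) ^ 2 - b s := by linarith [hs2 n]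
    have h21' : (0:ℝ) < (n : ℝ) ^ 2 + 1 := by linarith [h21 n]
    have hnum : ((n : ℝ) ^ 2 - b t) ^ α ≤ ((n : ℝ) ^ 2 - b t) ^ β :=
      Real.rpow_le_rpow_of_exponent_le (by linarith [ht2 n]) hαβ.le
    have hden : ((n : ℝ) ^ 2 + 1) ^ β ≤ ((n : ℝ) ^ 2 - b s) ^ β :=
      Real.rpow_le_rpow h21'.le (by linarith) (by linarith)
    show ((n : ℝ) ^ 2 - b t) ^ α / ((n : ℝ) ^ 2 - b s) ^ β ≤
      (((n : ℝ) ^ 2 - b t) / ((n : ℝ) ^ 2 + 1)) ^ β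
    rw [Real.div_rpow hxt.le h21'.le]
    have hds : (0:ℝ) < ((n : ℝ) ^ 2 - b s) ^ β := Real.rpow_pos_of_pos hxs β
    have hd1 : (0:ℝ) < ((n : ℝ) ^ 2 + 1) ^ β := Real.rpow_pos_of_pos h21' β
    calc ((n : ℝ) ^ 2 - b t) ^ α / ((n : ℝ) ^ 2 - b s) ^ β
        ≤ ((n : ℝ) ^ 2 - b t) ^ β / ((n : ℝ) ^ 2 - b s) ^ β := by gcongr
      _ ≤ ((n : ℝ) ^ 2 - b t) ^ β / ((n : ℝ) ^ 2 + 1) ^ β := by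
          gcongr
  have hC0 : 0 ≤ C := le_trans (hter_nn 1) (hterC 1)
  have habsC : ∀ n : ℕ+, |c n| ≤ C := fun n => by
    rw [abs_of_nonneg (hcnn n)]; exact hcC n
  -- ℓ² machinery
  have h2R : ((2 : ℝ≥0∞)).toReal = (2 : ℝ) := by norm_num
  have memf : ∀ w : X, Memℓp (fun n : ℕ+ => c n * e.repr w n) 2 := by
    intro w
    apply memℓp_gen
    have hg : Summable fun n : ℕ+ => ‖e.repr w n‖ ^ (2 : ℝ≥0∞).toReal :=
      (lp.memℓp (e.repr w)).summable (by norm_num)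
    refine Summable.of_nonneg_of_le (fun n => by positivity)
      (fun n => ?_) (hg.mul_left (C ^ (2 : ℝ≥0∞).toReal))
    rw [h2R]
    calc ‖c n * e.repr w n‖ ^ (2:ℝ) = (|c n| * ‖e.repr w n‖) ^ (2:ℝ) := by
          rw [norm_mul, Real.norm_eq_abs]
      _ ≤ (C * ‖e.repr w n‖) ^ (2:ℝ) :=
          Real.rpow_le_rpow (by positivity)
            (mul_le_mul_of_nonneg_right (habsC n) (norm_nonneg _)) (by norm_num)
      _ = C ^ (2:ℝ) * ‖e.repr w n‖ ^ (2:ℝ) := Real.mul_rpow hC0 (norm_nonneg _)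
  set D : X → X := fun w => e.repr.symm ⟨fun n => c n * e.repr w n, memf w⟩ with hD
  have hinner : ∀ (w : X) (n : ℕ+), e.repr w n = ⟪w, e n⟫ := by
    intro w n
    rw [e.repr_apply_apply, real_inner_comm]
  have hHasSum : ∀ w : X, HasSum (fun n : ℕ+ => (c n * ⟪w, e n⟫) • e n) (D w) := by
    intro w
    have := e.hasSum_repr_symm (⟨fun n => c n * e.repr w n, memf w⟩ : lp (fun _ : ℕ+ => ℝ) 2)
    convert this using 2 with n
    rw [← hinner w n]

  have hnorm : ∀ w : X, ‖D w‖ ≤ C * ‖w‖ := by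
    intro w
    have h1 : ‖D w‖ = ‖(⟨fun n => c n * e.repr w n, memf w⟩ : lp (fun _ : ℕ+ => ℝ) 2)‖ :=
      e.repr.symm.norm_map _
    rw [h1]
    refine lp.norm_le_of_forall_sum_le (p := 2) (by norm_num) (by positivity) ?_
    intro sfin
    rw [h2R]
    calc ∑ n ∈ sfin, ‖c n * e.repr w n‖ ^ (2:ℝ)
        ≤ ∑ n ∈ sfin, C ^ (2:ℝ) * ‖e.repr w n‖ ^ (2:ℝ) := by
          refine Finset.sum_le_sum fun n _ => ?_
          calc ‖c n * e.repr w n‖ ^ (2:ℝ) = (|c n| * ‖e.repr w n‖) ^ (2:ℝ) := by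
                rw [norm_mul, Real.norm_eq_abs]
            _ ≤ (C * ‖e.repr w n‖) ^ (2:ℝ) :=
                Real.rpow_le_rpow (by positivity)
                  (mul_le_mul_of_nonneg_right (habsC n) (norm_nonneg _)) (by norm_num)
            _ = C ^ (2:ℝ) * ‖e.repr w n‖ ^ (2:ℝ) := Real.mul_rpow hC0 (norm_nonneg _)
      _ = C ^ (2:ℝ) * ∑ n ∈ sfin, ‖e.repr w n‖ ^ (2:ℝ) := by rw [Finset.mul_sum]
      _ ≤ C ^ (2:ℝ) * ‖e.repr w‖ ^ (2:ℝ) := by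
          refine mul_le_mul_of_nonneg_left ?_ (by positivity)
          have := lp.sum_rpow_le_norm_rpow (p := 2) (by norm_num) (e.repr w) sfin
          rwa [h2R] at this
      _ = (C * ‖w‖) ^ (2:ℝ) := by
          rw [Real.mul_rpow hC0 (norm_nonneg _), e.repr.norm_map w]
  have htsum : ∀ w : X, ‖∑' n : ℕ+, (c n * ⟪w, e n⟫) • e n‖ ≤ C * ‖w‖ := by
    intro w
    rw [(hHasSum w).tsum_eq]
    exact hnorm w
  have hadd : ∀ w w' : X, (∑' n : ℕ+, (c n * ⟪w + w', e n⟫) • e n) =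
      (∑' n : ℕ+, (c n * ⟪w, e n⟫) • e n) + ∑' n : ℕ+, (c n * ⟪w', e n⟫) • e n := by
    intro w w'
    have h : HasSum (fun n : ℕ+ => (c n * ⟪w + w', e n⟫) • e n) (D w + D w') := by
      convert (hHasSum w).add (hHasSum w') using 2 with n
      rw [inner_add_left, mul_add, add_smul]
    rw [h.tsum_eq, (hHasSum w).tsum_eq, (hHasSum w').tsum_eq]
  have hsmul : ∀ (r : ℝ) (w : X), (∑' n : ℕ+, (c n * ⟪r • w, e n⟫) • e n) =
      r • ∑' n : ℕ+, (c n * ⟪w, e n⟫) • e n := by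
    intro r w
    have h : HasSum (fun n : ℕ+ => (c n * ⟪r • w, e n⟫) • e n) (r • D w) := by
      convert (hHasSum w).const_smul r using 2 with n
      rw [smul_smul, real_inner_smul_left, mul_left_comm]
    rw [h.tsum_eq, (hHasSum w).tsum_eq]
  refine ⟨hBdd, fun w => (hHasSum w).summable, ⟨⟨fun w w' => hadd w w', fun r w => hsmul r w⟩,
    C + 1, by linarith, fun w => ?_⟩, fun w => ?_⟩
  · exact le_trans (htsum w) (by nlinarith [norm_nonneg w])
  · exact htsum w
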